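/- If F(T) is a von Neumann subalgebra of B(H), then F(T) equals the commutant of the set {L_ℓ, L_ℓ*, H : ℓ ≥ 1} of operators in any GKSL representation of the generator. -/

import Mathlib

set_option maxHeartbeats 4000000
set_option synthInstance.maxHeartbeats 1000000

open NormedSpace
open scoped Nat

/-- An element is fixed by the semigroup `e^{tA}` for all `t ≥ 0` iff it is in the
kernel of the generator `A`. -/
theorem aux_fixed_iff_ker {𝔸 : Type*} [NormedRing 𝔸] [NormedAlgebra ℂ 𝔸] [CompleteSpace 𝔸]
    (A : 𝔸 →L[ℂ] 𝔸) (x : 𝔸) :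
    (∀ t : ℝ, 0 ≤ t → NormedSpace.exp (t • A) x = x) ↔ A x = 0 := by
  have hee : ∀ u : ℝ, exp (u • A) = exp (u • A) := fun u =>
    rfl
  constructor
  · intro h
    have hd : HasDerivAt (fun u : ℝ => exp (u • A)) (exp ((1:ℝ) • A) * A) 1 :=
      hasDerivAt_exp_smul_const A 1
    rw [one_smul] at hd
    have hcomp : HasDerivAt (fun u : ℝ => exp (u • A) x)
        ((exp A * A) x) 1 :=
      (((ContinuousLinearMap.apply ℂ 𝔸 x).restrictScalars ℝ).hasFDerivAt).comp_hasDerivAt 1 hd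
    have hev : (fun u : ℝ => exp (u • A) x) =ᶠ[nhds (1:ℝ)] fun _ => x := by
      filter_upwards [Ioi_mem_nhds (zero_lt_one : (0:ℝ) < 1)] with t ht
      rw [hee]; exact h t (le_of_lt ht)
    have hc : HasDerivAt (fun u : ℝ => exp (u • A) x) 0 1 :=
      (hasDerivAt_const (1:ℝ) x).congr_of_eventuallyEq hev
    have h0 : (exp A * A) x = 0 := by
      rw [hcomp.unique hc]
    have hcm : exp A * A = A * exp A := ((Commute.refl A).exp_left).eq
    rw [hcm] at h0
    have h1 := h 1 zero_le_one
    rw [← hee, one_smul] at h1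
    calc A x = A (exp A x) := by rw [h1]
    _ = (A * exp A) x := rfl
    _ = 0 := h0
  · intro hA t _
    have hpow : ∀ n : ℕ, n ≠ 0 → ((t • A : 𝔸 →L[ℂ] 𝔸) ^ n) x = 0 := by
      intro n hn
      obtain ⟨m, rfl⟩ := Nat.exists_eq_succ_of_ne_zero hn
      rw [pow_succ]
      show ((t • A : 𝔸 →L[ℂ] 𝔸) ^ m) ((t • A) x) = 0
      have h2 : (t • A) x = 0 := by simp [hA]
      rw [h2, map_zero]
    have hs : Summable (fun n : ℕ => ((n ! : ℂ))⁻¹ • (t • A) ^ n) :=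
      expSeries_summable' (𝕂 := ℂ) (t • A)
    rw [exp_eq_tsum ℂ]
    show (ContinuousLinearMap.apply ℂ 𝔸 x) (∑' n : ℕ, ((n ! : ℂ))⁻¹ • (t • A) ^ n) = x
    rw [(ContinuousLinearMap.apply ℂ 𝔸 x).map_tsum hs]
    have hterm : ∀ n : ℕ, (ContinuousLinearMap.apply ℂ 𝔸 x) (((n ! : ℂ))⁻¹ • (t • A) ^ n)
        = if n = 0 then x else 0 := by
      intro n
      by_cases hn : n = 0
      · subst hn; simp
      · simp [hn, ContinuousLinearMap.apply_apply, hpow n hn]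
    rw [tsum_congr hterm, tsum_eq_single 0 (by intro b hb; simp [hb])]
    simp

/-- The dissipation identity for a GKSL generator. -/
theorem aux_gksl_diss {B : Type*} [Ring B] [Algebra ℂ B] (N : ℕ) (H : B)
    (L M : Fin N → B) (x s : B)
    (𝓛' : B → B)
    (h : ∀ y, 𝓛' y = Complex.I • (H * y - y * H) -
      (1/2 : ℂ) • ∑ ℓ, (M ℓ * L ℓ * y - 2 * (M ℓ * y * L ℓ) + y * (M ℓ * L ℓ))) :
    𝓛' (s * x) - (𝓛' s) * x - s * (𝓛' x)
      = ∑ ℓ, (s * M ℓ - M ℓ * s) * (L ℓ * x - x * L ℓ) := by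
  rw [h, h, h]
  have step1 : ∀ (a1 a2 a3 S1 S2 S3 : B),
      (Complex.I • a1 - (1/2:ℂ) • S1) - (Complex.I • a2 - (1/2:ℂ) • S2) * x
        - s * (Complex.I • a3 - (1/2:ℂ) • S3)
      = Complex.I • (a1 - a2 * x - s * a3) - (1/2:ℂ) • (S1 - S2 * x - s * S3) := by
    intro a1 a2 a3 S1 S2 S3
    simp only [smul_sub, sub_mul, smul_mul_assoc, mul_sub, mul_smul_comm]
    abel
  rw [step1]
  have ham : (H * (s*x) - (s*x) * H) - (H * s - s * H) * x - s * (H * x - x * H) = 0 := by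
    noncomm_ring
  rw [ham, smul_zero, zero_sub]
  have hsum : (∑ ℓ, (M ℓ * L ℓ * (s*x) - 2 * (M ℓ * (s*x) * L ℓ) + (s*x) * (M ℓ * L ℓ)))
      - (∑ ℓ, (M ℓ * L ℓ * s - 2 * (M ℓ * s * L ℓ) + s * (M ℓ * L ℓ))) * x
      - s * (∑ ℓ, (M ℓ * L ℓ * x - 2 * (M ℓ * x * L ℓ) + x * (M ℓ * L ℓ)))
      = -(2 * ∑ ℓ, (s * M ℓ - M ℓ * s) * (L ℓ * x - x * L ℓ)) := by
    rw [Finset.sum_mul, Finset.mul_sum, ← Finset.sum_sub_distrib, ← Finset.sum_sub_distrib,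
      Finset.mul_sum, ← Finset.sum_neg_distrib]
    refine Finset.sum_congr rfl fun ℓ _ => ?_
    noncomm_ring
  rw [hsum]
  rw [smul_neg, neg_neg, two_mul, ← two_smul ℂ, smul_smul]
  norm_num

/-- If a sum of operators of the form `cℓ* cℓ` vanishes, each `cℓ` vanishes. -/
theorem aux_sum_star_mul_self_eq_zero {Hs : Type} [NormedAddCommGroup Hs]
    [InnerProductSpace ℂ Hs] [CompleteSpace Hs] {N : ℕ} (c : Fin N → (Hs →L[ℂ] Hs))
    (h : ∑ ℓ, star (c ℓ) * c ℓ = 0) : ∀ ℓ, c ℓ = 0 := by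
  intro ℓ
  ext v
  have h2 : (inner ℂ v ((∑ j, star (c j) * c j) v) : ℂ) = 0 := by rw [h]; simp
  have h3 : ∀ j : Fin N, (inner ℂ v ((star (c j) * c j) v) : ℂ)
      = ((‖c j v‖ : ℂ)) ^ 2 := by
    intro j
    rw [ContinuousLinearMap.mul_apply, ContinuousLinearMap.star_eq_adjoint,
      ContinuousLinearMap.adjoint_inner_right, inner_self_eq_norm_sq_to_K]
    norm_cast
  have h4 : ∑ j, ((‖c j v‖ : ℂ)) ^ 2 = 0 := by
    rw [← Finset.sum_congr rfl fun j _ => h3 j, ← inner_sum]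
    simpa [ContinuousLinearMap.sum_apply, inner_sum] using h2
  have h5 : ∑ j, (‖c j v‖ : ℝ) ^ 2 = 0 := by
    push_cast at h4 ⊢
    exact_mod_cast h4
  have h6 : (‖c ℓ v‖ : ℝ) ^ 2 = 0 :=
    (Finset.sum_eq_zero_iff_of_nonneg (fun j _ => sq_nonneg (‖c j v‖))).mp h5 ℓ
      (Finset.mem_univ ℓ)
  have h7 : ‖c ℓ v‖ = 0 := sq_eq_zero_iff.mp h6
  simpa using h7

/-- if the fixed point set `F(T)` of `T_t = e^{tL}` (with `L` a GKSL
generator with operators `H, (Lℓ)`) is a von Neumann subalgebra of `B(H)`, then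
it coincides with the commutant of `{Lℓ, Lℓ*, H : ℓ}`. -/
theorem fixed_points_eq_commutant
    {Hs : Type} [NormedAddCommGroup Hs] [InnerProductSpace ℂ Hs] [CompleteSpace Hs]
    (N : ℕ) (H : Hs →L[ℂ] Hs) (hH : IsSelfAdjoint H)
    (L : Fin N → (Hs →L[ℂ] Hs))
    (𝓛 : (Hs →L[ℂ] Hs) →L[ℂ] (Hs →L[ℂ] Hs))
    (h𝓛 : ∀ y, 𝓛 y = Complex.I • (H * y - y * H) -
      (1/2 : ℂ) • ∑ ℓ, (star (L ℓ) * L ℓ * y - 2 * (star (L ℓ) * y * L ℓ) +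
        y * (star (L ℓ) * L ℓ)))
    -- `F(T)` is a von Neumann subalgebra
    (hvN : ∃ M : VonNeumannAlgebra Hs,
      (M : Set (Hs →L[ℂ] Hs)) =
        {x | ∀ t : ℝ, 0 ≤ t → NormedSpace.exp (t • 𝓛) x = x}) :
    {x : Hs →L[ℂ] Hs | ∀ t : ℝ, 0 ≤ t → NormedSpace.exp (t • 𝓛) x = x} =
      {x | (∀ ℓ, Commute x (L ℓ) ∧ Commute x (star (L ℓ))) ∧ Commute x H} := by
  obtain ⟨M, hM⟩ := hvN
  ext x
  simp only [Set.mem_setOf_eq]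
  have hmem : ∀ y : Hs →L[ℂ] Hs,
      (∀ t : ℝ, 0 ≤ t → NormedSpace.exp (t • 𝓛) y = y) ↔ y ∈ M := by
    intro y
    rw [← SetLike.mem_coe, hM]
    rfl
  constructor
  · intro hx
    have hxM : x ∈ M := (hmem x).mp hx
    have hker : ∀ y : Hs →L[ℂ] Hs, y ∈ M → 𝓛 y = 0 := fun y hy =>
      (aux_fixed_iff_ker 𝓛 y).mp ((hmem y).mpr hy)
    -- key: for y ∈ M, L ℓ commutes with y
    have key : ∀ y : Hs →L[ℂ] Hs, y ∈ M → ∀ ℓ, L ℓ * y - y * L ℓ = 0 := by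
      intro y hy
      have h1 : 𝓛 y = 0 := hker y hy
      have h2 : 𝓛 (star y) = 0 := hker _ (star_mem hy)
      have h3 : 𝓛 (star y * y) = 0 := hker _ (mul_mem (star_mem hy) hy)
      have hd := aux_gksl_diss N H L (fun ℓ => star (L ℓ)) y (star y)
        (fun z => 𝓛 z) h𝓛
      rw [h1, h2, h3] at hd
      have hd' : ∑ ℓ, (star y * star (L ℓ) - star (L ℓ) * star y) *
          (L ℓ * y - y * L ℓ) = 0 := by
        rw [← hd]; simp
      apply aux_sum_star_mul_self_eq_zero (fun ℓ => L ℓ * y - y * L ℓ)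
      rw [← hd']
      refine Finset.sum_congr rfl fun j _ => ?_
      simp [star_sub, star_mul]
    have hbx : ∀ ℓ, x * L ℓ = L ℓ * x := fun ℓ => (sub_eq_zero.mp (key x hxM ℓ)).symm
    have hsx : ∀ ℓ, x * star (L ℓ) = star (L ℓ) * x := by
      intro ℓ
      have h := sub_eq_zero.mp (key (star x) (star_mem hxM) ℓ)
      have := congrArg star h
      simpa [star_mul] using this
    refine ⟨fun ℓ => ⟨hbx ℓ, hsx ℓ⟩, ?_⟩
    -- now extract the commutation with H from 𝓛 x = 0
    have h1 : 𝓛 x = 0 := hker x hxM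
    rw [h𝓛] at h1
    have hz : ∀ ℓ ∈ Finset.univ, star (L ℓ) * L ℓ * x - 2 * (star (L ℓ) * x * L ℓ) +
        x * (star (L ℓ) * L ℓ) = (0 : Hs →L[ℂ] Hs) := by
      intro ℓ _
      have e1 : star (L ℓ) * L ℓ * x = star (L ℓ) * x * L ℓ := by
        rw [mul_assoc, ← hbx ℓ, ← mul_assoc]
      have e2 : x * (star (L ℓ) * L ℓ) = star (L ℓ) * x * L ℓ := by
        rw [← mul_assoc, hsx ℓ]
      rw [e1, e2]; noncomm_ring
    rw [Finset.sum_eq_zero hz, smul_zero, sub_zero] at h1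
    have h2 : H * x - x * H = 0 := by
      rcases smul_eq_zero.mp h1 with hI | h2
      · exact absurd hI Complex.I_ne_zero
      · exact h2
    show x * H = H * x
    have := sub_eq_zero.mp h2
    exact this.symm
  · rintro ⟨hL, hxH⟩
    rw [hmem, ← SetLike.mem_coe, hM]
    intro t ht
    apply (aux_fixed_iff_ker 𝓛 x).mpr ?_ t ht
    rw [h𝓛]
    have hz : ∀ ℓ ∈ Finset.univ, star (L ℓ) * L ℓ * x - 2 * (star (L ℓ) * x * L ℓ) +
        x * (star (L ℓ) * L ℓ) = (0 : Hs →L[ℂ] Hs) := by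
      intro ℓ _
      have e1 : star (L ℓ) * L ℓ * x = star (L ℓ) * x * L ℓ := by
        rw [mul_assoc, ← (hL ℓ).1.eq, ← mul_assoc]
      have e2 : x * (star (L ℓ) * L ℓ) = star (L ℓ) * x * L ℓ := by
        rw [← mul_assoc, (hL ℓ).2.eq]
      rw [e1, e2]; noncomm_ring
    rw [Finset.sum_eq_zero hz, smul_zero, sub_zero, hxH.eq, sub_self, smul_zero]
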